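/- Let G be a graph on n vertices with Hamilton cycle v₁, v₂, …, v_n. Suppose 1 ≤ a₁ < a₂ < b₁ < b₂ < c₁ < c₂ ≤ n and {v_{a₁}, v_{b₁}}, {v_{a₂}, v_{c₁}}, {v_{b₂}, v_{c₂}} are edges of G. Then G contains a cycle of length n − (a₂−a₁−1) − (b₂−b₁−1) − (c₂−c₁−1) whose vertex set consists of all vertices of G except the vertices v_i with a₁ < i < a₂, with b₁ < i < b₂, or with c₁ < i < c₂. -/

import Mathlib

open SimpleGraph

namespace St15Aux

variable {V : Type} (G : SimpleGraph V)

/-- walk along consecutive vertices -/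
def segWalk (v : ℕ → V) (n : ℕ)
    (hadj : ∀ i : ℕ, 1 ≤ i → i < n → G.Adj (v i) (v (i + 1))) :
    ∀ (i k : ℕ), 1 ≤ i → i + k ≤ n → G.Walk (v i) (v (i + k))
  | i, 0, _, _ => Walk.nil.copy rfl (by rw [Nat.add_zero])
  | i, k + 1, h1, h2 =>
      (Walk.cons (hadj i h1 (by omega))
        (segWalk v n hadj (i + 1) k (by omega) (by omega))).copy rfl
        (congrArg v (by omega))

lemma segWalk_length (v : ℕ → V) (n : ℕ)
    (hadj : ∀ i : ℕ, 1 ≤ i → i < n → G.Adj (v i) (v (i + 1))) :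
    ∀ (i k : ℕ) (h1 : 1 ≤ i) (h2 : i + k ≤ n),
      (segWalk G v n hadj i k h1 h2).length = k
  | i, 0, _, _ => by simp [segWalk]
  | i, k + 1, h1, h2 => by
      simp [segWalk, segWalk_length v n hadj (i + 1) k (by omega) (by omega)]

def iv (i k : ℕ) : List ℕ := (List.range (k + 1)).map (fun t => i + t)

lemma mem_iv {i k x : ℕ} : x ∈ iv i k ↔ i ≤ x ∧ x ≤ i + k := by
  simp only [iv, List.mem_map, List.mem_range]
  constructor
  · rintro ⟨t, ht, rfl⟩; omega
  · rintro ⟨h1, h2⟩; exact ⟨x - i, by omega, by omega⟩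

lemma nodup_iv (i k : ℕ) : (iv i k).Nodup :=
  List.nodup_range.map (fun a b h => by omega)

lemma iv_succ (i k : ℕ) : iv i (k + 1) = i :: iv (i + 1) k := by
  unfold iv
  rw [List.range_succ_eq_map, List.map_cons, List.map_map]
  refine List.cons_eq_cons.mpr ⟨by simp, ?_⟩
  apply List.map_congr_left
  intro t _
  simp only [Function.comp_apply]
  omega

lemma segWalk_support (v : ℕ → V) (n : ℕ)
    (hadj : ∀ i : ℕ, 1 ≤ i → i < n → G.Adj (v i) (v (i + 1))) :
    ∀ (i k : ℕ) (h1 : 1 ≤ i) (h2 : i + k ≤ n),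
      (segWalk G v n hadj i k h1 h2).support = (iv i k).map v
  | i, 0, _, _ => by simp [segWalk, iv, List.range_succ]
  | i, k + 1, h1, h2 => by
      rw [segWalk, Walk.support_copy, Walk.support_cons,
        segWalk_support v n hadj (i + 1) k (by omega) (by omega), iv_succ, List.map_cons]

/-- if the edge between the endpoints of a nodup-support walk is an edge of the walk,
the walk has length 1 -/
lemma length_eq_one_of_edge {x y : V} (p : G.Walk x y) (hxy : x ≠ y)
    (hnd : p.support.Nodup) (he : s(x, y) ∈ p.edges) : p.length = 1 := by
  induction p with
  | nil => simp at he
  | @cons x z y h q ih =>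
    rw [Walk.edges_cons, List.mem_cons] at he
    rw [Walk.support_cons, List.nodup_cons] at hnd
    rcases he with he | he
    · rw [Sym2.eq_iff] at he
      rcases he with ⟨-, rfl⟩ | ⟨rfl, rfl⟩
      · cases q with
        | nil => simp
        | @cons _ w _ h' q' =>
          exfalso
          have h2 := hnd.2
          rw [Walk.support_cons, List.nodup_cons] at h2
          exact h2.1 q'.end_mem_support
      · exact absurd rfl h.ne
    · exact absurd (q.fst_mem_support_of_mem_edges he) hnd.1

end St15Aux

open St15Aux SimpleGraph

/-- `v 1, v 2, …, v n` is a Hamilton cycle of `G`: the `v i` for `1 ≤ i ≤ n` are pairwise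
distinct, every vertex occurs among them, consecutive ones are adjacent, and `v n` is
adjacent to `v 1`. -/
def IsHamCycleList {V : Type} [Fintype V] (G : SimpleGraph V) (n : ℕ) (v : ℕ → V) : Prop :=
  Fintype.card V = n ∧
  (∀ i j : ℕ, 1 ≤ i → i < j → j ≤ n → v i ≠ v j) ∧
  (∀ x : V, ∃ i : ℕ, 1 ≤ i ∧ i ≤ n ∧ v i = x) ∧
  (∀ i : ℕ, 1 ≤ i → i < n → G.Adj (v i) (v (i + 1))) ∧
  G.Adj (v n) (v 1)

/-- If `G` has Hamilton cycle `v 1, …, v n`,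
`1 ≤ a₁ < a₂ < b₁ < b₂ < c₁ < c₂ ≤ n`, and `{v a₁, v b₁}`, `{v a₂, v c₁}`, `{v b₂, v c₂}`
are edges of `G` (the chord configuration of a Type 2 semi-triangle), then `G` has a cycle
of length `n − (a₂−a₁−1) − (b₂−b₁−1) − (c₂−c₁−1)` whose vertex set consists of all
vertices except the `v i` with `a₁ < i < a₂`, `b₁ < i < b₂` or `c₁ < i < c₂`. -/
theorem statement15 {V : Type} [Fintype V] (G : SimpleGraph V) (n : ℕ) (v : ℕ → V)
    (hham : IsHamCycleList G n v) (a₁ a₂ b₁ b₂ c₁ c₂ : ℕ)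
    (ha₁ : 1 ≤ a₁) (ha : a₁ < a₂) (hab : a₂ < b₁) (hb : b₁ < b₂) (hbc : b₂ < c₁)
    (hc : c₁ < c₂) (hc₂ : c₂ ≤ n)
    (e₁ : G.Adj (v a₁) (v b₁)) (e₂ : G.Adj (v a₂) (v c₁)) (e₃ : G.Adj (v b₂) (v c₂)) :
    ∃ (u : V) (w : G.Walk u u), w.IsCycle ∧
      w.length = n - (a₂ - a₁ - 1) - (b₂ - b₁ - 1) - (c₂ - c₁ - 1) ∧
      ∀ x : V, x ∈ w.support ↔
        ¬ ∃ i : ℕ, ((a₁ < i ∧ i < a₂) ∨ (b₁ < i ∧ i < b₂) ∨ (c₁ < i ∧ i < c₂)) ∧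
          v i = x := by
  obtain ⟨hcard, hdist, hsurj, hadj, hlast⟩ := hham
  let p1 : G.Walk (v a₂) (v b₁) :=
    (segWalk G v n hadj a₂ (b₁ - a₂) (by omega) (by omega)).copy rfl (congrArg v (by omega))
  let p2 : G.Walk (v b₂) (v c₁) :=
    (segWalk G v n hadj b₂ (c₁ - b₂) (by omega) (by omega)).copy rfl (congrArg v (by omega))
  let p3 : G.Walk (v c₂) (v n) :=
    (segWalk G v n hadj c₂ (n - c₂) (by omega) (by omega)).copy rfl (congrArg v (by omega))
  let p4 : G.Walk (v 1) (v a₁) :=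
    (segWalk G v n hadj 1 (a₁ - 1) (by omega) (by omega)).copy rfl (congrArg v (by omega))
  let rest : G.Walk (v b₁) (v a₁) :=
    p1.reverse.append (Walk.cons e₂ (p2.reverse.append (Walk.cons e₃
      (p3.append (Walk.cons hlast p4)))))
  let L : List ℕ := (iv a₂ (b₁ - a₂)).reverse ++ ((iv b₂ (c₁ - b₂)).reverse ++
    ((iv c₂ (n - c₂)) ++ (iv 1 (a₁ - 1))))
  have hsup : rest.support = L.map v := by
    simp only [rest, L, p1, p2, p3, p4, Walk.support_append, Walk.support_cons, List.tail_cons,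
      Walk.support_reverse, Walk.support_copy, segWalk_support, List.map_reverse,
      List.map_append]
  have hmemL : ∀ j, j ∈ L ↔
      ((1 ≤ j ∧ j ≤ a₁) ∨ (a₂ ≤ j ∧ j ≤ b₁) ∨ (b₂ ≤ j ∧ j ≤ c₁) ∨ (c₂ ≤ j ∧ j ≤ n)) := by
    intro j
    simp only [L, List.mem_append, List.mem_reverse, mem_iv]
    omega
  have hbd : ∀ j ∈ L, 1 ≤ j ∧ j ≤ n := by
    intro j hj
    have := (hmemL j).1 hj
    omega
  have hinj : ∀ i ∈ L, ∀ j ∈ L, v i = v j → i = j := by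
    intro i hi j hj hvij
    by_contra hne
    have hi' := hbd i hi
    have hj' := hbd j hj
    rcases Nat.lt_or_ge i j with h | h
    · exact hdist i j (by omega) h (by omega) hvij
    · exact hdist j i (by omega) (by omega) (by omega) hvij.symm
  have hndL : L.Nodup := by
    simp only [L, List.nodup_append, List.nodup_reverse, List.disjoint_left,
      List.mem_append, List.mem_reverse, mem_iv]
    refine ⟨nodup_iv _ _, ⟨nodup_iv _ _, ⟨nodup_iv _ _, nodup_iv _ _, ?_⟩, ?_⟩, ?_⟩ <;>
      (intro x h1 h2; omega)
  have hndsup : rest.support.Nodup := by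
    rw [hsup]; exact hndL.map_on hinj
  have hlen : rest.length =
      (b₁ - a₂) + (1 + ((c₁ - b₂) + (1 + ((n - c₂) + (1 + (a₁ - 1)))))) := by
    simp only [rest, p1, p2, p3, p4, Walk.length_append, Walk.length_cons,
      Walk.length_reverse, Walk.length_copy, segWalk_length]
    omega
  refine ⟨v a₁, Walk.cons e₁ rest, ?_, ?_, ?_⟩
  · rw [SimpleGraph.Walk.cons_isCycle_iff]
    refine ⟨Walk.IsPath.mk' hndsup, fun hmem => ?_⟩
    have hne : v b₁ ≠ v a₁ := (hdist a₁ b₁ ha₁ (by omega) (by omega)).symm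
    have h1 := length_eq_one_of_edge G rest hne hndsup (by rwa [Sym2.eq_swap])
    omega
  · rw [Walk.length_cons, hlen]
    omega
  · intro x
    have hx : x ∈ (Walk.cons e₁ rest).support ↔ ∃ j ∈ L, v j = x := by
      rw [Walk.support_cons, List.mem_cons, hsup]
      constructor
      · rintro (rfl | hx)
        · exact ⟨a₁, (hmemL a₁).2 (by omega), rfl⟩
        · obtain ⟨j, hj, rfl⟩ := List.mem_map.mp hx
          exact ⟨j, hj, rfl⟩
      · rintro ⟨j, hj, rfl⟩
        exact Or.inr (List.mem_map_of_mem (f := v) hj)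
    rw [hx]
    constructor
    · rintro ⟨j, hj, rfl⟩ ⟨i, hgap, hvi⟩
      have hj' := (hmemL j).1 hj
      have : i ≠ j := by omega
      rcases Nat.lt_or_ge i j with h | h
      · exact hdist i j (by omega) h (by omega) hvi
      · exact hdist j i (by omega) (by omega) (by omega) hvi.symm
    · intro hno
      obtain ⟨i, hi1, hin, rfl⟩ := hsurj x
      have hig : ¬ ((a₁ < i ∧ i < a₂) ∨ (b₁ < i ∧ i < b₂) ∨ (c₁ < i ∧ i < c₂)) :=
        fun h => hno ⟨i, h, rfl⟩
      exact ⟨i, (hmemL i).2 (by omega), rfl⟩
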